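/- The 4×4 boxworld matrix C with rows (1,0,0,1), (0,1,1,0), (1,0,1,0), (0,1,0,1) has rank 3 but nonnegative rank 4; in particular, C admits no factorization C = RP with R, P entrywise nonnegative and rank(R) = rank(P) = rank(C) = 3. -/

import Mathlib

open Matrix

private lemma bw_exists_pos {k : ℕ} (f : Fin k → ℝ)
    (h0 : ∀ i, 0 ≤ f i) (h : 0 < ∑ i, f i) : ∃ i, 0 < f i := by
  by_contra hc
  push_neg at hc
  have : ∑ i, f i = 0 := Finset.sum_eq_zero fun i _ => le_antisymm (hc i) (h0 i)
  rw [this] at h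
  exact lt_irrefl 0 h

private lemma bw_pos_of_mul {a b : ℝ} (ha : 0 ≤ a) (hb : 0 ≤ b) (h : 0 < a * b) :
    0 < a ∧ 0 < b := by
  constructor
  · rcases lt_or_eq_of_le ha with h' | h'
    · exact h'
    · exfalso; rw [← h', zero_mul] at h; exact lt_irrefl 0 h
  · rcases lt_or_eq_of_le hb with h' | h'
    · exact h'
    · exfalso; rw [← h', mul_zero] at h; exact lt_irrefl 0 h

set_option maxHeartbeats 1000000 in
/-- The boxworld COPE matrix has rank 3 and nonnegative rank 4; in particular
it admits no equirank nonnegative matrix factorization. -/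
theorem boxworld_rank_separation
    (C : Matrix (Fin 4) (Fin 4) ℝ)
    (hC : C = !![1,0,0,1; 0,1,1,0; 1,0,1,0; 0,1,0,1]) :
    C.rank = 3 ∧
    (∃ (W : Matrix (Fin 4) (Fin 4) ℝ) (H : Matrix (Fin 4) (Fin 4) ℝ),
      (∀ i j, 0 ≤ W i j) ∧ (∀ i j, 0 ≤ H i j) ∧ C = W * H) ∧
    (∀ (k : ℕ) (W : Matrix (Fin 4) (Fin k) ℝ) (H : Matrix (Fin k) (Fin 4) ℝ),
      (∀ i j, 0 ≤ W i j) → (∀ i j, 0 ≤ H i j) → C = W * H → 4 ≤ k) ∧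
    ¬ ∃ (k : ℕ) (R : Matrix (Fin 4) (Fin k) ℝ) (P : Matrix (Fin k) (Fin 4) ℝ),
      (∀ i j, 0 ≤ R i j) ∧ (∀ i j, 0 ≤ P i j) ∧ C = R * P ∧
      R.rank = 3 ∧ P.rank = 3 := by
  -- basic entry facts
  have hdiag : ∀ r : Fin 4, C r r = 1 := by
    intro r; fin_cases r <;> simp [hC]
  have hzero : ∀ r s : Fin 4, r ≠ s → C r s = 0 ∨ C s r = 0 := by
    intro r s hrs
    fin_cases r <;> fin_cases s <;> simp_all [hC]
  -- Part 1 : rank = 3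
  have hrank : C.rank = 3 := by
    rw [hC]
    set A : Matrix (Fin 4) (Fin 4) ℝ := !![1,0,0,0; 0,1,0,0; -1,0,1,0; -1,-1,1,1] with hAdef
    set B : Matrix (Fin 4) (Fin 4) ℝ := !![1,0,0,-1; 0,1,-1,-1; 0,0,1,1; 0,0,0,1] with hBdef
    have hA : IsUnit A.det := by
      simp [hAdef, Matrix.det_succ_row_zero, Fin.sum_univ_succ]
    have hB : IsUnit B.det := by
      simp [hBdef, Matrix.det_succ_row_zero, Fin.sum_univ_succ]
    have key : A * !![(1:ℝ),0,0,1; 0,1,1,0; 1,0,1,0; 0,1,0,1] * B = diagonal ![1,1,1,0] := by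
      ext i j
      fin_cases i <;> fin_cases j <;>
        simp [hAdef, hBdef, Matrix.mul_apply, Fin.sum_univ_four,
          Matrix.diagonal_apply, Matrix.vecHead, Matrix.vecTail, Fin.ext_iff]
    have h1 := Matrix.rank_mul_eq_left_of_isUnit_det B
      (A * !![(1:ℝ),0,0,1; 0,1,1,0; 1,0,1,0; 0,1,0,1]) hB
    have h2 := Matrix.rank_mul_eq_right_of_isUnit_det A
      (!![(1:ℝ),0,0,1; 0,1,1,0; 1,0,1,0; 0,1,0,1]) hA
    rw [key, h2] at h1
    rw [Matrix.rank_diagonal] at h1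
    rw [← h1]
    have e : { i : Fin 4 // ![(1:ℝ),1,1,0] i ≠ 0 } ≃ ({0,1,2} : Finset (Fin 4)) := by
      apply Equiv.subtypeEquivRight
      intro i
      fin_cases i <;> norm_num [Fin.ext_iff]
    rw [Fintype.card_congr e, Fintype.card_coe]
    decide
  refine ⟨hrank, ⟨C, 1, ?_, ?_, (mul_one C).symm⟩, ?_, ?_⟩
  · intro i j
    rw [hC]
    fin_cases i <;> fin_cases j <;> norm_num
  · intro i j
    rw [Matrix.one_apply]
    split_ifs <;> norm_num
  -- Part 3 : nonnegative rank ≥ 4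
  · intro k W H hW hH hWH
    have hterm : ∀ r : Fin 4, ∃ i, 0 < W r i * H i r := by
      intro r
      apply bw_exists_pos _ (fun i => mul_nonneg (hW r i) (hH i r))
      have : C r r = ∑ i, W r i * H i r := by rw [hWH, Matrix.mul_apply]
      rw [← this, hdiag r]; norm_num
    choose φ hφ using hterm
    have hinj : Function.Injective φ := by
      intro r s hrs
      by_contra hne
      have hr := hφ r
      have hs := hφ s
      rw [hrs] at hr
      obtain ⟨hWr, hHr⟩ := bw_pos_of_mul (hW r _) (hH _ r) hr
      obtain ⟨hWs, hHs⟩ := bw_pos_of_mul (hW s _) (hH _ s) hs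
      have hrs1 : 0 < C r s := by
        have : C r s = ∑ i, W r i * H i s := by rw [hWH, Matrix.mul_apply]
        rw [this]
        have hle : W r (φ s) * H (φ s) s ≤ ∑ i, W r i * H i s :=
          Finset.single_le_sum (f := fun i => W r i * H i s)
            (fun i _ => mul_nonneg (hW r i) (hH i s)) (Finset.mem_univ _)
        exact lt_of_lt_of_le (mul_pos hWr hHs) hle
      have hrs2 : 0 < C s r := by
        have : C s r = ∑ i, W s i * H i r := by rw [hWH, Matrix.mul_apply]
        rw [this]
        have hle : W s (φ s) * H (φ s) r ≤ ∑ i, W s i * H i r :=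
          Finset.single_le_sum (f := fun i => W s i * H i r)
            (fun i _ => mul_nonneg (hW s i) (hH i r)) (Finset.mem_univ _)
        exact lt_of_lt_of_le (mul_pos hWs hHr) hle
      rcases hzero r s hne with h | h
      · rw [h] at hrs1; exact lt_irrefl 0 hrs1
      · rw [h] at hrs2; exact lt_irrefl 0 hrs2
    have := Fintype.card_le_of_injective φ hinj
    simpa using this
  -- Part 4 : no equirank nonnegative factorization
  · rintro ⟨k, R, P, hR, hP, hCRP, hrR, hrP⟩
    -- the linear functional x ↦ x0 + x1 - x2 - x3 vanishes on the column space of C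
    have hfC : ∀ x ∈ LinearMap.range C.mulVecLin, x 0 + x 1 - x 2 - x 3 = 0 := by
      rintro x ⟨v, rfl⟩
      simp only [Matrix.mulVecLin_apply, Matrix.mulVec, dotProduct,
        Fin.sum_univ_four, hC]
      simp [Matrix.vecHead, Matrix.vecTail]
      ring
    -- and on the column space of Cᵀ (the row space of C)
    have hfCT : ∀ x ∈ LinearMap.range Cᵀ.mulVecLin, x 0 + x 1 - x 2 - x 3 = 0 := by
      rintro x ⟨v, rfl⟩
      simp only [Matrix.mulVecLin_apply, Matrix.mulVec, dotProduct,
        Fin.sum_univ_four, Matrix.transpose_apply, hC]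
      simp [Matrix.vecHead, Matrix.vecTail]
      ring
    -- column space of R equals column space of C
    have hleR : LinearMap.range C.mulVecLin ≤ LinearMap.range R.mulVecLin := by
      rw [hCRP, Matrix.mulVecLin_mul]
      exact LinearMap.range_comp_le_range _ _
    have heqR : LinearMap.range C.mulVecLin = LinearMap.range R.mulVecLin := by
      apply Submodule.eq_of_le_of_finrank_le hleR
      show R.rank ≤ C.rank
      rw [hrR, hrank]
    have hleP : LinearMap.range Cᵀ.mulVecLin ≤ LinearMap.range Pᵀ.mulVecLin := by
      rw [hCRP, Matrix.transpose_mul, Matrix.mulVecLin_mul]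
      exact LinearMap.range_comp_le_range _ _
    have heqP : LinearMap.range Cᵀ.mulVecLin = LinearMap.range Pᵀ.mulVecLin := by
      apply Submodule.eq_of_le_of_finrank_le hleP
      show Pᵀ.rank ≤ Cᵀ.rank
      rw [Matrix.rank_transpose, Matrix.rank_transpose, hrP, hrank]
    have hcolR : ∀ i : Fin k, R 0 i + R 1 i - R 2 i - R 3 i = 0 := by
      intro i
      have hmem : R.mulVec (Pi.single i 1) ∈ LinearMap.range R.mulVecLin := ⟨_, rfl⟩
      rw [← heqR] at hmem
      have := hfC _ hmem
      simpa [Matrix.mulVec_single] using this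
    have hrowP : ∀ i : Fin k, P i 0 + P i 1 - P i 2 - P i 3 = 0 := by
      intro i
      have hmem : Pᵀ.mulVec (Pi.single i 1) ∈ LinearMap.range Pᵀ.mulVecLin := ⟨_, rfl⟩
      rw [← heqP] at hmem
      have := hfCT _ hmem
      simpa [Matrix.mulVec_single] using this
    -- extract a positive term from C 0 0 = 1
    have hsum : ∀ r s : Fin 4, C r s = ∑ j, R r j * P j s := by
      intro r s; rw [hCRP, Matrix.mul_apply]
    obtain ⟨i, hi⟩ : ∃ i, 0 < R 0 i * P i 0 := by
      apply bw_exists_pos _ (fun j => mul_nonneg (hR 0 j) (hP j 0))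
      rw [← hsum 0 0]
      simp [hC]
    obtain ⟨hR0, hP0⟩ := bw_pos_of_mul (hR 0 i) (hP i 0) hi
    -- zero entries kill corresponding factors
    have hkill : ∀ r s : Fin 4, C r s = 0 → R r i * P i s = 0 := by
      intro r s h
      have h' : ∑ j, R r j * P j s = 0 := by rw [← hsum r s, h]
      have := (Finset.sum_eq_zero_iff_of_nonneg
        (fun j _ => mul_nonneg (hR r j) (hP j s))).mp h' i (Finset.mem_univ i)
      exact this
    have hR1 : R 1 i = 0 := by
      have := hkill 1 0 (by simp [hC])
      rcases mul_eq_zero.mp this with h | h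
      · exact h
      · exact absurd h (ne_of_gt hP0)
    have hR3 : R 3 i = 0 := by
      have := hkill 3 0 (by simp [hC])
      rcases mul_eq_zero.mp this with h | h
      · exact h
      · exact absurd h (ne_of_gt hP0)
    have hP1 : P i 1 = 0 := by
      have := hkill 0 1 (by simp [hC])
      rcases mul_eq_zero.mp this with h | h
      · exact absurd h (ne_of_gt hR0)
      · exact h
    have hP2 : P i 2 = 0 := by
      have := hkill 0 2 (by simp [hC])
      rcases mul_eq_zero.mp this with h | h
      · exact absurd h (ne_of_gt hR0)
      · exact h
    have hR2 : R 2 i = R 0 i := by have := hcolR i; rw [hR1, hR3] at this; linarith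
    have hP3 : P i 3 = P i 0 := by have := hrowP i; rw [hP1, hP2] at this; linarith
    have hfinal := hkill 2 3 (by simp [hC])
    rw [hR2, hP3] at hfinal
    exact absurd hfinal (ne_of_gt (mul_pos hR0 hP0))
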